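/- The six Pauli operators on three qubits γ₁ = Z⊗X⊗I, γ₂ = Z⊗Y⊗I, γ₃ = I⊗Z⊗X, γ₄ = I⊗Z⊗Y, γ₅ = X⊗I⊗Z, γ₆ = Y⊗I⊗Z are Hermitian, square to the identity, and pairwise anticommute; the operator B = (−i)³ γ₁γ₂γ₃γ₄γ₅γ₆ equals Z⊗Z⊗Z; and the weight conditions hold: weight(B) = 3, weight(γ_p) ≥ 2, weight(B γ_p) ≥ 2, and weight(B γ_p γ_q) ≥ 2 for all 1 ≤ p < q ≤ 6. -/

import Mathlib

open Matrix

/-- Labels for single-qubit Pauli matrices. -/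
inductive P1 : Type
  | I : P1
  | X : P1
  | Y : P1
  | Z : P1
deriving DecidableEq

/-- The matrix entries of a single-qubit Pauli matrix, with the qubit basis indexed by
`Bool` (`false = |0⟩`, `true = |1⟩`). -/
def P1.entry : P1 → Bool → Bool → ℂ
  | P1.I, a, b => if a = b then 1 else 0
  | P1.X, a, b => if a = b then 0 else 1
  | P1.Y, a, b => if a = b then 0 else if a then Complex.I else -Complex.I
  | P1.Z, a, b => if a = b then (if a then -1 else 1) else 0

/-- The multi-qubit Pauli matrix `⨂_{q ∈ Q} P_{f q}` on the qubits indexed by `Q`,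
acting on `(ℂ²)^{⊗Q}` (whose standard basis is indexed by `Q → Bool`). -/
noncomputable def PauliMatrix {Q : Type*} [Fintype Q] (f : Q → P1) :
    Matrix (Q → Bool) (Q → Bool) ℂ :=
  Matrix.of fun a b => ∏ q, (f q).entry (a q) (b q)

/-- The weight of a Pauli operator: the number of qubits on which it acts nontrivially. -/
noncomputable def pweight {Q : Type*} [Fintype Q] (f : Q → P1) : ℕ :=
  (Finset.univ.filter fun q => f q ≠ P1.I).card

/-- The Pauli labels of the six local Majorana modes on three qubits:
`γ₁ = Z⊗X⊗I`, `γ₂ = Z⊗Y⊗I`, `γ₃ = I⊗Z⊗X`, `γ₄ = I⊗Z⊗Y`, `γ₅ = X⊗I⊗Z`, `γ₆ = Y⊗I⊗Z`. -/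
def lbl6 : Fin 6 → Fin 3 → P1 :=
  ![![P1.Z, P1.X, P1.I], ![P1.Z, P1.Y, P1.I], ![P1.I, P1.Z, P1.X],
    ![P1.I, P1.Z, P1.Y], ![P1.X, P1.I, P1.Z], ![P1.Y, P1.I, P1.Z]]

/-- The six local Majorana modes `γ₁, …, γ₆` on three qubits. -/
noncomputable def gamma6 (p : Fin 6) : Matrix (Fin 3 → Bool) (Fin 3 → Bool) ℂ :=
  PauliMatrix (lbl6 p)

/-- The operator `B = (-i)³ γ₁ γ₂ γ₃ γ₄ γ₅ γ₆`. -/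
noncomputable def Bgamma6 : Matrix (Fin 3 → Bool) (Fin 3 → Bool) ℂ :=
  ((-Complex.I) ^ 3) • ((List.ofFn gamma6).prod)






def pmul : P1 → P1 → P1
  | P1.I, x => x
  | x, P1.I => x
  | P1.X, P1.X => P1.I
  | P1.Y, P1.Y => P1.I
  | P1.Z, P1.Z => P1.I
  | P1.X, P1.Y => P1.Z
  | P1.Y, P1.X => P1.Z
  | P1.Y, P1.Z => P1.X
  | P1.Z, P1.Y => P1.X
  | P1.Z, P1.X => P1.Y
  | P1.X, P1.Z => P1.Y

def pphase : P1 → P1 → ℂ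
  | P1.X, P1.Y => Complex.I
  | P1.Y, P1.X => -Complex.I
  | P1.Y, P1.Z => Complex.I
  | P1.Z, P1.Y => -Complex.I
  | P1.Z, P1.X => Complex.I
  | P1.X, P1.Z => -Complex.I
  | _, _ => 1

lemma entry_mul (a b : P1) (x y : Bool) :
    ∑ c : Bool, a.entry x c * b.entry c y = pphase a b * (pmul a b).entry x y := by
  cases a <;> cases b <;> cases x <;> cases y <;>
    simp [P1.entry, pphase, pmul, Fintype.sum_bool] <;> ring_nf <;>
    simp [Complex.I_sq] <;> ring

lemma PauliMatrix_mul {Q : Type*} [Fintype Q] [DecidableEq Q] (f g : Q → P1) :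
    PauliMatrix f * PauliMatrix g =
      (∏ q, pphase (f q) (g q)) • PauliMatrix (fun q => pmul (f q) (g q)) := by
  ext x y
  simp only [Matrix.mul_apply, PauliMatrix, of_apply, Matrix.smul_apply, smul_eq_mul]
  calc ∑ c : Q → Bool, (∏ q, (f q).entry (x q) (c q)) * ∏ q, (g q).entry (c q) (y q)
      = ∑ c : Q → Bool, ∏ q, (f q).entry (x q) (c q) * (g q).entry (c q) (y q) :=
        Finset.sum_congr rfl fun c _ => Finset.prod_mul_distrib.symm
    _ = ∏ q, ∑ b : Bool, (f q).entry (x q) b * (g q).entry b (y q) := by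
        rw [Finset.prod_univ_sum (fun _ => (Finset.univ : Finset Bool))
          (fun q b => (f q).entry (x q) b * (g q).entry b (y q)), Fintype.piFinset_univ]
    _ = ∏ q, pphase (f q) (g q) * (pmul (f q) (g q)).entry (x q) (y q) :=
        Finset.prod_congr rfl fun q _ => entry_mul _ _ _ _
    _ = (∏ q, pphase (f q) (g q)) * ∏ q, (pmul (f q) (g q)).entry (x q) (y q) :=
        Finset.prod_mul_distrib

def nphase : P1 → P1 → ZMod 4
  | P1.X, P1.Y => 1
  | P1.Y, P1.X => 3
  | P1.Y, P1.Z => 1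
  | P1.Z, P1.Y => 3
  | P1.Z, P1.X => 1
  | P1.X, P1.Z => 3
  | _, _ => 0

lemma pphase_eq (a b : P1) : pphase a b = Complex.I ^ (nphase a b).val := by
  cases a <;> cases b <;>
    norm_num [pphase, nphase, pow_succ, Complex.I_sq,
      show ZMod.val (0 : ZMod 4) = 0 from rfl, show ZMod.val (1 : ZMod 4) = 1 from rfl,
      show ZMod.val (3 : ZMod 4) = 3 from rfl]

lemma I_pow_mod4 (n : ℕ) : Complex.I ^ n = Complex.I ^ (n % 4) := by
  conv_lhs => rw [← Nat.div_add_mod n 4]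
  rw [pow_add, pow_mul, Complex.I_pow_four, one_pow, one_mul]

lemma I_pow_val_add (a b : ZMod 4) :
    Complex.I ^ (a + b).val = Complex.I ^ a.val * Complex.I ^ b.val := by
  rw [ZMod.val_add, ← I_pow_mod4, pow_add]

lemma PauliMatrix_mul3 (f g : Fin 3 → P1) :
    PauliMatrix f * PauliMatrix g =
      (Complex.I ^ (∑ q, nphase (f q) (g q)).val) • PauliMatrix (fun q => pmul (f q) (g q)) := by
  rw [PauliMatrix_mul, Fin.prod_univ_three, Fin.sum_univ_three, pphase_eq, pphase_eq, pphase_eq,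
    I_pow_val_add, I_pow_val_add]

lemma entry_star (a : P1) (x y : Bool) :
    star (a.entry x y) = a.entry y x := by
  cases a <;> cases x <;> cases y <;> simp [P1.entry]

lemma PauliMatrix_herm {Q : Type*} [Fintype Q] (f : Q → P1) :
    (PauliMatrix f)ᴴ = PauliMatrix f := by
  ext x y
  simp only [conjTranspose_apply, PauliMatrix, of_apply, star_prod, entry_star]

lemma PauliMatrix_one {Q : Type*} [Fintype Q] [DecidableEq Q] :
    PauliMatrix (fun _ : Q => P1.I) = 1 := by
  ext x y
  simp only [PauliMatrix, of_apply, P1.entry, Matrix.one_apply]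
  rw [Finset.prod_boole]
  simp [funext_iff, eq_comm]

lemma pmul_self (a : P1) : pmul a a = P1.I := by cases a <;> rfl
lemma nphase_self (a : P1) : nphase a a = 0 := by cases a <;> rfl
lemma pmul_comm (a b : P1) : pmul a b = pmul b a := by cases a <;> cases b <;> rfl

lemma PauliMatrix_sq (f : Fin 3 → P1) : PauliMatrix f * PauliMatrix f = 1 := by
  rw [PauliMatrix_mul3]
  simp [pmul_self, nphase_self, PauliMatrix_one]

lemma anticomm_of (f g : Fin 3 → P1)
    (h : (∑ q, nphase (f q) (g q)) = (∑ q, nphase (g q) (f q)) + 2) :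
    PauliMatrix f * PauliMatrix g + PauliMatrix g * PauliMatrix f = 0 := by
  rw [PauliMatrix_mul3, PauliMatrix_mul3]
  have hfg : (fun q => pmul (g q) (f q)) = fun q => pmul (f q) (g q) :=
    funext fun q => pmul_comm _ _
  rw [hfg, ← add_smul, h, I_pow_val_add]
  norm_num [pow_succ, show ((2 : ZMod 4)).val = 2 from rfl]


def lfold : List (Fin 3 → P1) → (Fin 3 → P1)
  | [] => fun _ => P1.I
  | f :: t => fun q => pmul (f q) (lfold t q)

def nphaseL : List (Fin 3 → P1) → ZMod 4
  | [] => 0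
  | f :: t => (∑ q, nphase (f q) (lfold t q)) + nphaseL t

lemma list_pauli_prod (L : List (Fin 3 → P1)) :
    (L.map PauliMatrix).prod = (Complex.I ^ (nphaseL L).val) • PauliMatrix (lfold L) := by
  induction L with
  | nil =>
    simp [lfold, nphaseL, PauliMatrix_one, show ZMod.val (0 : ZMod 4) = 0 from rfl]
  | cons f t ih =>
    rw [List.map_cons, List.prod_cons, ih, Matrix.mul_smul, PauliMatrix_mul3, smul_smul,
      show nphaseL (f :: t) = (∑ q, nphase (f q) (lfold t q)) + nphaseL t from rfl,
      I_pow_val_add, show lfold (f :: t) = fun q => pmul (f q) (lfold t q) from rfl,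
      mul_comm]

lemma hB : Bgamma6 = PauliMatrix (fun _ : Fin 3 => P1.Z) := by
  have h0 : List.ofFn gamma6 = (List.ofFn lbl6).map PauliMatrix := by
    rw [List.map_ofFn]; rfl
  rw [Bgamma6, h0, list_pauli_prod, smul_smul,
    show lfold (List.ofFn lbl6) = fun _ : Fin 3 => P1.Z from by decide,
    show nphaseL (List.ofFn lbl6) = 3 from by decide,
    show ZMod.val (3 : ZMod 4) = 3 from rfl]
  norm_num [pow_succ, Complex.I_sq]

theorem stmt18 :
    -- the six modes are Hermitian,
    (∀ p : Fin 6, (gamma6 p)ᴴ = gamma6 p) ∧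
    -- square to the identity,
    (∀ p : Fin 6, gamma6 p * gamma6 p = 1) ∧
    -- and pairwise anticommute;
    (∀ p q : Fin 6, p ≠ q → gamma6 p * gamma6 q + gamma6 q * gamma6 p = 0) ∧
    -- B = (-i)³ γ₁γ₂γ₃γ₄γ₅γ₆ equals Z⊗Z⊗Z;
    Bgamma6 = PauliMatrix (fun _ : Fin 3 => P1.Z) ∧
    -- weight(B) = 3;
    pweight (fun _ : Fin 3 => P1.Z) = 3 ∧
    -- weight(γ_p) ≥ 2;
    (∀ p : Fin 6, 2 ≤ pweight (lbl6 p)) ∧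
    -- weight(B γ_p) ≥ 2;
    (∀ p : Fin 6, ∃ (c : ℂ) (f : Fin 3 → P1), c ≠ 0 ∧
      Bgamma6 * gamma6 p = c • PauliMatrix f ∧ 2 ≤ pweight f) ∧
    -- weight(B γ_p γ_q) ≥ 2 for p < q
    (∀ p q : Fin 6, p < q → ∃ (c : ℂ) (f : Fin 3 → P1), c ≠ 0 ∧
      Bgamma6 * gamma6 p * gamma6 q = c • PauliMatrix f ∧ 2 ≤ pweight f) := by
  refine ⟨fun p => PauliMatrix_herm _, fun p => PauliMatrix_sq _,
    fun p q hpq => anticomm_of _ _ (by revert hpq; revert p q; decide), hB, by decide,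
    by decide, ?_, ?_⟩
  · intro p
    exact ⟨Complex.I ^ (∑ q, nphase P1.Z (lbl6 p q)).val,
      fun q => pmul P1.Z (lbl6 p q), pow_ne_zero _ Complex.I_ne_zero,
      by rw [hB, gamma6, PauliMatrix_mul3], by revert p; decide⟩
  · intro p q hlt
    refine ⟨Complex.I ^ (∑ q', nphase P1.Z (lbl6 p q')).val *
        Complex.I ^ (∑ q', nphase (pmul P1.Z (lbl6 p q')) (lbl6 q q')).val,
      fun q' => pmul (pmul P1.Z (lbl6 p q')) (lbl6 q q'),
      mul_ne_zero (pow_ne_zero _ Complex.I_ne_zero) (pow_ne_zero _ Complex.I_ne_zero),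
      by rw [hB, gamma6, gamma6, PauliMatrix_mul3, Matrix.smul_mul, PauliMatrix_mul3, smul_smul],
      by revert hlt; revert p q; decide⟩
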